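/- Let N be a norm on ℝ², let p, q, w, u ∈ ℝ² with N(w) = N(u) = 1, and define h : ℝ² → [0,∞) by h(z) := N((p + z₁·w) − (q + z₂·u)). Let ℓ ⊆ ℝ² be a valley of positive slope for h, i.e., a line of positive slope such that for every z ∈ ℓ the function t ↦ h(z₁ + t, z₂ − t) is non-increasing on (−∞,0] and non-decreasing on [0,∞). Let x, y ∈ ℝ² with x₁ ≤ y₁ and x₂ ≤ y₂, and set Ξ := [x₁,y₁] × [x₂,y₂]. (i) If ℓ ∩ Ξ ≠ ∅, let x̂ be the componentwise-minimal and ŷ the componentwise-maximal point of ℓ ∩ Ξ (so x̂ shares a coordinate with x and ŷ shares a coordinate with y); then the (x,y)-path tracing the line segments x → x̂ → ŷ → y (travelling along ℓ from x̂ to ŷ) attains opt_h(x,y), i.e., its cost is less than or equal to the cost of every (x,y)-path. (ii) If ℓ ∩ Ξ = ∅, let ξ be whichever of (x₁,y₂) and (y₁,x₂) has the smaller Euclidean distance to ℓ; then the (x,y)-path tracing the line segments x → ξ → y attains opt_h(x,y). -/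

import Mathlib

/-- `N : ℝ × ℝ → ℝ` is a norm on `ℝ²`. -/
def IsNorm (N : ℝ × ℝ → ℝ) : Prop :=
  (∀ z : ℝ × ℝ, 0 ≤ N z) ∧
  (∀ z : ℝ × ℝ, N z = 0 ↔ z = 0) ∧
  (∀ (c : ℝ) (z : ℝ × ℝ), N (c • z) = |c| * N z) ∧
  (∀ z w : ℝ × ℝ, N (z + w) ≤ N z + N w)

/-- An `(x,y)`-path: a function `f : [x₁+x₂, y₁+y₂] → ℝ` with `f(x₁+x₂) = x₁`,
`f(y₁+y₂) = y₁` such that both `f` and `s ↦ s − f s` are monotone non-decreasing;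
it encodes the monotone unit-`ℓ¹`-speed curve `s ↦ (f s, s − f s)` from `x` to `y`. -/
def IsPath (x y : ℝ × ℝ) (f : ℝ → ℝ) : Prop :=
  x.1 ≤ y.1 ∧ x.2 ≤ y.2 ∧
  f (x.1 + x.2) = x.1 ∧ f (y.1 + y.2) = y.1 ∧
  MonotoneOn f (Set.Icc (x.1 + x.2) (y.1 + y.2)) ∧
  MonotoneOn (fun s => s - f s) (Set.Icc (x.1 + x.2) (y.1 + y.2))

/-- The cost of an `(x,y)`-path `f` with respect to `h`. -/
noncomputable def pathCost (h : ℝ × ℝ → ℝ) (x y : ℝ × ℝ) (f : ℝ → ℝ) : ℝ :=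
  ∫ s in (x.1 + x.2)..(y.1 + y.2), h (f s, s - f s)

/-- Euclidean distance from a point to a set in `ℝ²`. -/
noncomputable def euclInfDist (z : ℝ × ℝ) (S : Set (ℝ × ℝ)) : ℝ :=
  sInf ((fun w : ℝ × ℝ => Real.sqrt ((z.1 - w.1) ^ 2 + (z.2 - w.2) ^ 2)) '' S)

open Set

namespace ValleyAux

noncomputable def cF (z₀ d : ℝ × ℝ) (s : ℝ) : ℝ :=
  z₀.1 + (s - (z₀.1 + z₀.2)) * (d.1 / (d.1 + d.2))

def loF (x y : ℝ × ℝ) (s : ℝ) : ℝ := max x.1 (s - y.2)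

def hiF (x y : ℝ × ℝ) (s : ℝ) : ℝ := min y.1 (s - x.2)

noncomputable def fF (x y z₀ d : ℝ × ℝ) (s : ℝ) : ℝ :=
  max (loF x y s) (min (hiF x y s) (cF z₀ d s))

variable {x y z₀ d : ℝ × ℝ}

lemma cF_mono (hd1 : 0 < d.1) (hd2 : 0 < d.2) : Monotone (cF z₀ d) := by
  intro a b hab
  have h1 : 0 ≤ d.1 / (d.1 + d.2) := by positivity
  simp only [cF]
  nlinarith [mul_le_mul_of_nonneg_right (sub_le_sub_right hab (z₀.1 + z₀.2)) h1]

lemma cF_lip (hd1 : 0 < d.1) (hd2 : 0 < d.2) {a b : ℝ} (hab : a ≤ b) :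
    cF z₀ d b ≤ cF z₀ d a + (b - a) := by
  have hδ : 0 < d.1 + d.2 := by linarith
  have h1 : d.1 / (d.1 + d.2) ≤ 1 := by
    rw [div_le_one hδ]; linarith
  have h0 : 0 ≤ d.1 / (d.1 + d.2) := by positivity
  simp only [cF]
  nlinarith [mul_le_mul_of_nonneg_left h1 (sub_nonneg.2 hab)]

lemma fF_mono (hd1 : 0 < d.1) (hd2 : 0 < d.2) : Monotone (fF x y z₀ d) := by
  intro a b hab
  exact max_le_max (max_le_max le_rfl (by linarith))
    (min_le_min (min_le_min le_rfl (by linarith)) (cF_mono hd1 hd2 hab))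

lemma fF_lip (hd1 : 0 < d.1) (hd2 : 0 < d.2) {a b : ℝ} (hab : a ≤ b) :
    fF x y z₀ d b ≤ fF x y z₀ d a + (b - a) := by
  have hc := cF_lip (z₀ := z₀) hd1 hd2 hab
  have hlo : loF x y b ≤ loF x y a + (b - a) := by
    rw [loF, loF, ← max_add_add_right]
    exact max_le_max (by linarith) (by linarith)
  have hhi : hiF x y b ≤ hiF x y a + (b - a) := by
    rw [hiF, hiF, ← min_add_add_right]
    exact min_le_min (by linarith) (by linarith)
  calc fF x y z₀ d b ≤ max (loF x y a + (b-a)) (min (hiF x y a + (b-a)) (cF z₀ d a + (b-a))) :=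
        max_le_max hlo (min_le_min hhi hc)
    _ = fF x y z₀ d a + (b - a) := by rw [min_add_add_right, max_add_add_right]; rfl

lemma lo_le_hi (hxy1 : x.1 ≤ y.1) (hxy2 : x.2 ≤ y.2) {s : ℝ}
    (hs : s ∈ Icc (x.1 + x.2) (y.1 + y.2)) : loF x y s ≤ hiF x y s := by
  obtain ⟨h1, h2⟩ := hs
  simp only [loF, hiF, max_le_iff, le_min_iff]
  refine ⟨⟨hxy1, by linarith⟩, ⟨by linarith, by linarith⟩⟩

lemma fF_start (hxy1 : x.1 ≤ y.1) (hxy2 : x.2 ≤ y.2) : fF x y z₀ d (x.1 + x.2) = x.1 := by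
  simp only [fF, loF, hiF]
  have h1 : max x.1 (x.1 + x.2 - y.2) = x.1 := max_eq_left (by linarith)
  have h2 : min y.1 (x.1 + x.2 - x.2) = x.1 := by
    rw [add_sub_cancel_right]; exact min_eq_right hxy1
  rw [h1, h2]
  exact max_eq_left (min_le_left _ _)

lemma fF_end (hxy1 : x.1 ≤ y.1) (hxy2 : x.2 ≤ y.2) : fF x y z₀ d (y.1 + y.2) = y.1 := by
  simp only [fF, loF, hiF]
  have h1 : max x.1 (y.1 + y.2 - y.2) = y.1 := by
    rw [add_sub_cancel_right]; exact max_eq_right hxy1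
  have h2 : min y.1 (y.1 + y.2 - x.2) = y.1 := min_eq_left (by linarith)
  rw [h1, h2]
  exact max_eq_left (min_le_left _ _)

lemma isPath_fF (hd1 : 0 < d.1) (hd2 : 0 < d.2) (hxy1 : x.1 ≤ y.1) (hxy2 : x.2 ≤ y.2) :
    IsPath x y (fF x y z₀ d) := by
  refine ⟨hxy1, hxy2, fF_start hxy1 hxy2, fF_end hxy1 hxy2,
    ((fF_mono hd1 hd2).monotoneOn _), ?_⟩
  intro a _ b _ hab
  have := fF_lip (x := x) (y := y) (z₀ := z₀) hd1 hd2 hab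
  simp only
  linarith

lemma path_bounds {g : ℝ → ℝ} (hg : IsPath x y g) {s : ℝ}
    (hs : s ∈ Icc (x.1 + x.2) (y.1 + y.2)) : loF x y s ≤ g s ∧ g s ≤ hiF x y s := by
  obtain ⟨h1, h2, hst, hen, hm1, hm2⟩ := hg
  have hmem0 : (x.1 + x.2) ∈ Icc (x.1 + x.2) (y.1 + y.2) := ⟨le_rfl, by linarith⟩
  have hmem1 : (y.1 + y.2) ∈ Icc (x.1 + x.2) (y.1 + y.2) := ⟨by linarith, le_rfl⟩
  have ha := hm1 hmem0 hs hs.1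
  have hb := hm1 hs hmem1 hs.2
  have hc := hm2 hmem0 hs hs.1
  have hd := hm2 hs hmem1 hs.2
  simp only [] at hc hd
  rw [hst] at hc
  rw [hen] at hb hd
  simp only [loF, hiF, max_le_iff, le_min_iff]
  refine ⟨⟨by linarith, by linarith⟩, by linarith, by linarith⟩

lemma fF_bounds (hxy1 : x.1 ≤ y.1) (hxy2 : x.2 ≤ y.2) {s : ℝ}
    (hs : s ∈ Icc (x.1 + x.2) (y.1 + y.2)) :
    loF x y s ≤ fF x y z₀ d s ∧ fF x y z₀ d s ≤ hiF x y s := by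
  refine ⟨le_max_left _ _, max_le (lo_le_hi hxy1 hxy2 hs) (le_trans (min_le_left _ _) le_rfl)⟩

end ValleyAux
namespace ValleyAux

lemma isNorm_continuous {N : ℝ × ℝ → ℝ} (hN : IsNorm N) : Continuous N := by
  obtain ⟨h0, heq, hsmul, htri⟩ := hN
  set K : ℝ := N (1, 0) + N (0, 1) with hK
  have hKnn : 0 ≤ K := by have := h0 (1,0); have := h0 (0,1); linarith
  have key : ∀ a b : ℝ × ℝ, |N a - N b| ≤ K * dist a b := by
    intro a b
    have hdecomp : ∀ v : ℝ × ℝ, N v ≤ |v.1| * N (1, 0) + |v.2| * N (0, 1) := by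
      intro v
      have hv : v = v.1 • ((1 : ℝ), (0 : ℝ)) + v.2 • ((0 : ℝ), (1 : ℝ)) := by
        ext <;> simp
      calc N v = N (v.1 • ((1:ℝ),(0:ℝ)) + v.2 • ((0:ℝ),(1:ℝ))) := by rw [← hv]
        _ ≤ N (v.1 • ((1:ℝ),(0:ℝ))) + N (v.2 • ((0:ℝ),(1:ℝ))) := htri _ _
        _ = |v.1| * N (1,0) + |v.2| * N (0,1) := by rw [hsmul, hsmul]
    have hsub : ∀ a b : ℝ × ℝ, N a - N b ≤ N (a - b) := by
      intro a b
      have := htri (a - b) b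
      simp only [sub_add_cancel] at this
      linarith
    have h1 : |N a - N b| ≤ N (a - b) := by
      rcases abs_cases (N a - N b) with ⟨he, _⟩ | ⟨he, _⟩
      · rw [he]; exact hsub a b
      · rw [he]
        have := hsub b a
        have hnn : N (b - a) ≤ N (a - b) := by
          have : (b - a) = (-1 : ℝ) • (a - b) := by ext <;> simp [neg_sub] <;> ring
          rw [this, hsmul]; simp
        linarith
    have h2 : N (a - b) ≤ K * dist a b := by
      have := hdecomp (a - b)
      have hd1 : |(a - b).1| ≤ dist a b := by
        rw [Prod.fst_sub, ← Real.dist_eq, Prod.dist_eq]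
        exact le_max_left _ _
      have hd2 : |(a - b).2| ≤ dist a b := by
        rw [Prod.snd_sub, ← Real.dist_eq, Prod.dist_eq]
        exact le_max_right _ _
      have e0 : 0 ≤ N ((1:ℝ),(0:ℝ)) := h0 _
      have e1 : 0 ≤ N ((0:ℝ),(1:ℝ)) := h0 _
      calc N (a - b) ≤ |(a-b).1| * N (1,0) + |(a-b).2| * N (0,1) := this
        _ ≤ dist a b * N (1,0) + dist a b * N (0,1) := by
            exact add_le_add (mul_le_mul_of_nonneg_right hd1 e0)
              (mul_le_mul_of_nonneg_right hd2 e1)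
        _ = K * dist a b := by ring
    linarith
  have : LipschitzWith (Real.toNNReal K) N := by
    rw [lipschitzWith_iff_dist_le_mul]
    intro a b
    rw [Real.dist_eq, Real.coe_toNNReal K hKnn]
    exact key a b
  exact this.continuous

lemma h_continuous {N : ℝ × ℝ → ℝ} (hN : IsNorm N) {p q w u : ℝ × ℝ} {h : ℝ × ℝ → ℝ}
    (hh : ∀ z : ℝ × ℝ, h z = N ((p + z.1 • w) - (q + z.2 • u))) : Continuous h := by
  have : h = fun z => N ((p + z.1 • w) - (q + z.2 • u)) := funext hh
  rw [this]
  exact (isNorm_continuous hN).comp (by fun_prop)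

lemma cost_integrable {h : ℝ × ℝ → ℝ} (hcont : Continuous h) {x y : ℝ × ℝ} {g : ℝ → ℝ}
    (hg : IsPath x y g) :
    IntervalIntegrable (fun s => h (g s, s - g s)) MeasureTheory.volume
      (x.1 + x.2) (y.1 + y.2) := by
  obtain ⟨h1, h2, hst, hen, hm1, hm2⟩ := hg
  set a := x.1 + x.2 with ha
  set b := y.1 + y.2 with hb
  have hab : a ≤ b := by rw [ha, hb]; linarith
  set G : ℝ → ℝ := fun s => g (max a (min s b)) with hG
  have hGmono : Monotone G := by
    intro s t hst'
    have hms : max a (min s b) ∈ Icc a b := by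
      constructor
      · exact le_max_left _ _
      · exact max_le hab (min_le_right _ _)
    have hmt : max a (min t b) ∈ Icc a b := by
      constructor
      · exact le_max_left _ _
      · exact max_le hab (min_le_right _ _)
    exact hm1 hms hmt (max_le_max le_rfl (min_le_min hst' le_rfl))
  have hGmeas : Measurable G := hGmono.measurable
  have hFmeas : Measurable (fun s => h (G s, s - G s)) :=
    hcont.measurable.comp (hGmeas.prodMk (measurable_id.sub hGmeas))
  obtain ⟨C, hC⟩ := (IsCompact.prod isCompact_Icc isCompact_Icc :
      IsCompact (Icc x.1 y.1 ×ˢ Icc x.2 y.2)).exists_bound_of_continuousOn hcont.continuousOn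
  have hGeq : ∀ s ∈ Ioc a b, G s = g s := by
    intro s hs
    have : max a (min s b) = s := by
      rw [min_eq_left hs.2, max_eq_right hs.1.le]
    rw [hG]; simp only [this]
  rw [intervalIntegrable_iff_integrableOn_Ioc_of_le hab]
  have hint : MeasureTheory.IntegrableOn (fun s => h (G s, s - G s)) (Ioc a b)
      MeasureTheory.volume := by
    refine MeasureTheory.Integrable.mono' (g := fun _ => C)
      (MeasureTheory.integrableOn_const measure_Ioc_lt_top.ne)
      hFmeas.aestronglyMeasurable ?_
    · rw [MeasureTheory.ae_restrict_iff' measurableSet_Ioc]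
      filter_upwards with s
      intro hs
      have hsIcc : s ∈ Icc a b := Ioc_subset_Icc_self hs
      have hbd := path_bounds (x := x) (y := y) ⟨h1, h2, hst, hen, hm1, hm2⟩ hsIcc
      rw [hGeq s hs]
      have hmem : ((g s, s - g s) : ℝ × ℝ) ∈ Icc x.1 y.1 ×ˢ Icc x.2 y.2 := by
        constructor
        · constructor
          · exact le_trans (le_max_left _ _) hbd.1
          · exact le_trans hbd.2 (min_le_left _ _)
        · constructor
          · have := le_trans hbd.2 (min_le_right _ _); simpa using by linarith
          · have := le_trans (le_max_right _ _ : s - y.2 ≤ loF x y s) hbd.1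
            simpa using by linarith
      exact hC _ hmem
  exact hint.congr_fun (fun s hs => by show h (G s, s - G s) = _; rw [hGeq s hs]) measurableSet_Ioc

end ValleyAux
namespace ValleyAux

variable {x y z₀ d : ℝ × ℝ} {h : ℝ × ℝ → ℝ}

lemma cF_mem_line (hd1 : 0 < d.1) (hd2 : 0 < d.2) (s : ℝ) :
    ∃ lam : ℝ, ((cF z₀ d s, s - cF z₀ d s) : ℝ × ℝ) = z₀ + lam • d := by
  have hδ : d.1 + d.2 ≠ 0 := by positivity
  refine ⟨(s - (z₀.1 + z₀.2)) / (d.1 + d.2), ?_⟩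
  have e1 : cF z₀ d s = z₀.1 + (s - (z₀.1 + z₀.2)) / (d.1 + d.2) * d.1 := by
    rw [cF]; field_simp
  have e2 : s - cF z₀ d s = z₀.2 + (s - (z₀.1 + z₀.2)) / (d.1 + d.2) * d.2 := by
    rw [cF]; field_simp; ring
  ext
  · simpa using e1
  · simpa using e2

/-- On the antidiagonal through sum `s`, `a ↦ h (a, s - a)` is antitone left of `c`
and monotone right of `c`, where `c = cF z₀ d s`. -/
lemma slice_mono (s : ℝ) {c : ℝ}
    (hanti : AntitoneOn (fun t => h (c + t, (s - c) - t)) (Set.Iic 0))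
    (hmono : MonotoneOn (fun t => h (c + t, (s - c) - t)) (Set.Ici 0)) :
    (∀ b1 b2 : ℝ, c ≤ b1 → b1 ≤ b2 → h (b1, s - b1) ≤ h (b2, s - b2)) ∧
    (∀ b1 b2 : ℝ, b1 ≤ b2 → b2 ≤ c → h (b2, s - b2) ≤ h (b1, s - b1)) := by
  have key : ∀ b : ℝ, (fun t => h (c + t, (s - c) - t)) (b - c) = h (b, s - b) := by
    intro b
    simp only
    rw [show c + (b - c) = b from by ring, show s - c - (b - c) = s - b from by ring]
  constructor
  · intro b1 b2 hb1 hb12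
    have := hmono (show (b1 - c) ∈ Set.Ici (0:ℝ) from by simp; linarith)
      (show (b2 - c) ∈ Set.Ici (0:ℝ) from by simp; linarith) (by linarith)
    rwa [key b1, key b2] at this
  · intro b1 b2 hb12 hb2
    have := hanti (show (b1 - c) ∈ Set.Iic (0:ℝ) from by simp; linarith)
      (show (b2 - c) ∈ Set.Iic (0:ℝ) from by simp; linarith) (by linarith)
    rwa [key b1, key b2] at this

lemma fF_pointwise_opt (hd1 : 0 < d.1) (hd2 : 0 < d.2)
    (hxy1 : x.1 ≤ y.1) (hxy2 : x.2 ≤ y.2)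
    {ℓ : Set (ℝ × ℝ)} (hℓ : ℓ = {z : ℝ × ℝ | ∃ lam : ℝ, z = z₀ + lam • d})
    (hvalley : ∀ z ∈ ℓ,
      AntitoneOn (fun t => h (z.1 + t, z.2 - t)) (Set.Iic 0) ∧
      MonotoneOn (fun t => h (z.1 + t, z.2 - t)) (Set.Ici 0))
    {s : ℝ} (hs : s ∈ Set.Icc (x.1 + x.2) (y.1 + y.2))
    {a : ℝ} (halo : loF x y s ≤ a) (hahi : a ≤ hiF x y s) :
    h (fF x y z₀ d s, s - fF x y z₀ d s) ≤ h (a, s - a) := by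
  set c := cF z₀ d s with hc
  have hmem : ((c, s - c) : ℝ × ℝ) ∈ ℓ := by
    rw [hℓ]; exact cF_mem_line hd1 hd2 s
  obtain ⟨hanti, hmono⟩ := hvalley _ hmem
  obtain ⟨hR, hL⟩ := slice_mono (h := h) s hanti hmono
  have hlohi := lo_le_hi hxy1 hxy2 hs
  rcases lt_or_ge c (loF x y s) with hcl | hcl
  · -- c < lo : f = lo, everything admissible is ≥ lo ≥ c
    have hf : fF x y z₀ d s = loF x y s := by
      rw [fF, min_eq_right (le_trans hcl.le hlohi), max_eq_left hcl.le]
    rw [hf]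
    exact hR _ _ (by linarith) halo
  · rcases le_or_gt c (hiF x y s) with hch | hch
    · -- lo ≤ c ≤ hi : f = c
      have hf : fF x y z₀ d s = c := by
        rw [fF, min_eq_right hch, max_eq_right hcl]
      rw [hf]
      rcases le_total a c with hac | hac
      · exact hL _ _ hac le_rfl
      · exact hR _ _ le_rfl hac
    · -- c > hi : f = hi
      have hf : fF x y z₀ d s = hiF x y s := by
        rw [fF, min_eq_left hch.le, max_eq_right hlohi]
      rw [hf]
      exact hL _ _ hahi hch.le

lemma fF_opt (hd1 : 0 < d.1) (hd2 : 0 < d.2)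
    (hxy1 : x.1 ≤ y.1) (hxy2 : x.2 ≤ y.2)
    (hcont : Continuous h)
    {ℓ : Set (ℝ × ℝ)} (hℓ : ℓ = {z : ℝ × ℝ | ∃ lam : ℝ, z = z₀ + lam • d})
    (hvalley : ∀ z ∈ ℓ,
      AntitoneOn (fun t => h (z.1 + t, z.2 - t)) (Set.Iic 0) ∧
      MonotoneOn (fun t => h (z.1 + t, z.2 - t)) (Set.Ici 0)) :
    ∀ g : ℝ → ℝ, IsPath x y g →
      pathCost h x y (fF x y z₀ d) ≤ pathCost h x y g := by
  intro g hg
  have hab : x.1 + x.2 ≤ y.1 + y.2 := by linarith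
  refine intervalIntegral.integral_mono_on hab
    (cost_integrable hcont (isPath_fF hd1 hd2 hxy1 hxy2)) (cost_integrable hcont hg) ?_
  intro s hs
  obtain ⟨hbl, hbh⟩ := path_bounds hg hs
  exact fF_pointwise_opt hd1 hd2 hxy1 hxy2 hℓ hvalley hs hbl hbh

end ValleyAux
namespace ValleyAux

lemma seg_image {a b : ℝ × ℝ} (h1 : a.1 ≤ b.1) (h2 : a.2 ≤ b.2) {γ : ℝ → ℝ × ℝ}
    (hγ : ∀ s ∈ Icc (a.1 + a.2) (b.1 + b.2),
      γ s = a + ((s - (a.1 + a.2)) / ((b.1 + b.2) - (a.1 + a.2))) • (b - a)) :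
    γ '' Icc (a.1 + a.2) (b.1 + b.2) = segment ℝ a b := by
  set σa := a.1 + a.2 with hσa
  set σb := b.1 + b.2 with hσb
  have hab : σa ≤ σb := by rw [hσa, hσb]; linarith
  rcases eq_or_lt_of_le hab with heq | hlt
  · -- degenerate : a = b
    have hba : b = a := by
      have e1 : b.1 = a.1 := by linarith
      have e2 : b.2 = a.2 := by linarith
      exact Prod.ext e1 e2
    subst hba
    rw [← heq, Set.Icc_self, Set.image_singleton, segment_same]
    have := hγ σa (by rw [← heq]; exact ⟨le_rfl, le_rfl⟩)
    rw [this]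
    simp
  · rw [segment_eq_image' ℝ a b]
    ext z
    constructor
    · rintro ⟨s, hs, rfl⟩
      refine ⟨(s - σa) / (σb - σa), ⟨?_, ?_⟩, (hγ s hs).symm⟩
      · apply div_nonneg (by linarith [hs.1]) (by linarith)
      · rw [div_le_one (by linarith)]; linarith [hs.2]
    · rintro ⟨θ, hθ, rfl⟩
      refine ⟨σa + θ * (σb - σa), ⟨by nlinarith [hθ.1], by nlinarith [hθ.2]⟩, ?_⟩
      rw [hγ _ ⟨by nlinarith [hθ.1], by nlinarith [hθ.2]⟩]
      congr 1
      rw [add_sub_cancel_left, mul_div_assoc, div_self (by linarith), mul_one]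

variable {x y z₀ d : ℝ × ℝ}

lemma cF_at (hd1 : 0 < d.1) (hd2 : 0 < d.2) {ζ : ℝ × ℝ} {lam : ℝ} (hζ : ζ = z₀ + lam • d) :
    cF z₀ d (ζ.1 + ζ.2) = ζ.1 := by
  have hδ : d.1 + d.2 ≠ 0 := by positivity
  have e1 : ζ.1 = z₀.1 + lam * d.1 := by rw [hζ]; simp [Prod.fst_add]
  have e2 : ζ.2 = z₀.2 + lam * d.2 := by rw [hζ]; simp [Prod.snd_add]
  rw [cF, e1, e2]
  field_simp
  ring

lemma min_corner (hd1 : 0 < d.1) (hd2 : 0 < d.2)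
    {ℓ : Set (ℝ × ℝ)} (hℓ : ℓ = {z : ℝ × ℝ | ∃ lam : ℝ, z = z₀ + lam • d})
    {Ξ : Set (ℝ × ℝ)} (hΞ : Ξ = Set.Icc x.1 y.1 ×ˢ Set.Icc x.2 y.2)
    {xh : ℝ × ℝ} (hxh : xh ∈ ℓ ∩ Ξ) (hmin : ∀ z ∈ ℓ ∩ Ξ, xh.1 ≤ z.1 ∧ xh.2 ≤ z.2) :
    xh.1 = x.1 ∨ xh.2 = x.2 := by
  obtain ⟨hxhl, hxhΞ⟩ := hxh
  rw [hΞ] at hxhΞ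
  obtain ⟨⟨hx1, hy1⟩, ⟨hx2, hy2⟩⟩ := hxhΞ
  by_contra hcon
  push_neg at hcon
  obtain ⟨hne1, hne2⟩ := hcon
  have hs1 : x.1 < xh.1 := lt_of_le_of_ne hx1 (Ne.symm hne1)
  have hs2 : x.2 < xh.2 := lt_of_le_of_ne hx2 (Ne.symm hne2)
  rw [hℓ] at hxhl
  obtain ⟨lam, hlam⟩ := hxhl
  set ε : ℝ := min ((xh.1 - x.1) / d.1) ((xh.2 - x.2) / d.2) with hε
  have hεpos : 0 < ε := lt_min (div_pos (by linarith) hd1) (div_pos (by linarith) hd2)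
  have hεd1 : ε * d.1 ≤ xh.1 - x.1 := by
    have := min_le_left ((xh.1 - x.1) / d.1) ((xh.2 - x.2) / d.2)
    rw [← hε] at this
    calc ε * d.1 ≤ (xh.1 - x.1) / d.1 * d.1 := mul_le_mul_of_nonneg_right this hd1.le
      _ = xh.1 - x.1 := div_mul_cancel₀ _ (ne_of_gt hd1)
  have hεd2 : ε * d.2 ≤ xh.2 - x.2 := by
    have := min_le_right ((xh.1 - x.1) / d.1) ((xh.2 - x.2) / d.2)
    rw [← hε] at this
    calc ε * d.2 ≤ (xh.2 - x.2) / d.2 * d.2 := mul_le_mul_of_nonneg_right this hd2.le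
      _ = xh.2 - x.2 := div_mul_cancel₀ _ (ne_of_gt hd2)
  set z' : ℝ × ℝ := z₀ + (lam - ε) • d with hz'
  have hz'1 : z'.1 = xh.1 - ε * d.1 := by
    have e1 : xh.1 = z₀.1 + lam * d.1 := by rw [hlam]; simp [Prod.fst_add]
    rw [hz']; simp [Prod.fst_add]; rw [e1]; try ring
  have hz'2 : z'.2 = xh.2 - ε * d.2 := by
    have e2 : xh.2 = z₀.2 + lam * d.2 := by rw [hlam]; simp [Prod.snd_add]
    rw [hz']; simp [Prod.snd_add]; rw [e2]; try ring
  have hz'mem : z' ∈ ℓ ∩ Ξ := by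
    constructor
    · rw [hℓ]; exact ⟨lam - ε, rfl⟩
    · rw [hΞ]
      constructor
      · rw [hz'1]
        constructor
        · linarith
        · nlinarith
      · rw [hz'2]
        constructor
        · linarith
        · nlinarith
  have := (hmin z' hz'mem).1
  rw [hz'1] at this
  nlinarith

lemma max_corner (hd1 : 0 < d.1) (hd2 : 0 < d.2)
    {ℓ : Set (ℝ × ℝ)} (hℓ : ℓ = {z : ℝ × ℝ | ∃ lam : ℝ, z = z₀ + lam • d})
    {Ξ : Set (ℝ × ℝ)} (hΞ : Ξ = Set.Icc x.1 y.1 ×ˢ Set.Icc x.2 y.2)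
    {yh : ℝ × ℝ} (hyh : yh ∈ ℓ ∩ Ξ) (hmax : ∀ z ∈ ℓ ∩ Ξ, z.1 ≤ yh.1 ∧ z.2 ≤ yh.2) :
    yh.1 = y.1 ∨ yh.2 = y.2 := by
  obtain ⟨hyhl, hyhΞ⟩ := hyh
  rw [hΞ] at hyhΞ
  obtain ⟨⟨hx1, hy1⟩, ⟨hx2, hy2⟩⟩ := hyhΞ
  by_contra hcon
  push_neg at hcon
  obtain ⟨hne1, hne2⟩ := hcon
  have hs1 : yh.1 < y.1 := lt_of_le_of_ne hy1 hne1
  have hs2 : yh.2 < y.2 := lt_of_le_of_ne hy2 hne2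
  rw [hℓ] at hyhl
  obtain ⟨lam, hlam⟩ := hyhl
  set ε : ℝ := min ((y.1 - yh.1) / d.1) ((y.2 - yh.2) / d.2) with hε
  have hεpos : 0 < ε := lt_min (div_pos (by linarith) hd1) (div_pos (by linarith) hd2)
  have hεd1 : ε * d.1 ≤ y.1 - yh.1 := by
    have := min_le_left ((y.1 - yh.1) / d.1) ((y.2 - yh.2) / d.2)
    rw [← hε] at this
    calc ε * d.1 ≤ (y.1 - yh.1) / d.1 * d.1 := mul_le_mul_of_nonneg_right this hd1.le
      _ = y.1 - yh.1 := div_mul_cancel₀ _ (ne_of_gt hd1)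
  have hεd2 : ε * d.2 ≤ y.2 - yh.2 := by
    have := min_le_right ((y.1 - yh.1) / d.1) ((y.2 - yh.2) / d.2)
    rw [← hε] at this
    calc ε * d.2 ≤ (y.2 - yh.2) / d.2 * d.2 := mul_le_mul_of_nonneg_right this hd2.le
      _ = y.2 - yh.2 := div_mul_cancel₀ _ (ne_of_gt hd2)
  set z' : ℝ × ℝ := z₀ + (lam + ε) • d with hz'
  have hz'1 : z'.1 = yh.1 + ε * d.1 := by
    have e1 : yh.1 = z₀.1 + lam * d.1 := by rw [hlam]; simp [Prod.fst_add]
    rw [hz']; simp [Prod.fst_add]; rw [e1]; try ring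
  have hz'2 : z'.2 = yh.2 + ε * d.2 := by
    have e2 : yh.2 = z₀.2 + lam * d.2 := by rw [hlam]; simp [Prod.snd_add]
    rw [hz']; simp [Prod.snd_add]; rw [e2]; try ring
  have hz'mem : z' ∈ ℓ ∩ Ξ := by
    constructor
    · rw [hℓ]; exact ⟨lam + ε, rfl⟩
    · rw [hΞ]
      constructor
      · rw [hz'1]
        constructor
        · nlinarith
        · linarith
      · rw [hz'2]
        constructor
        · nlinarith
        · linarith
  have := (hmax z' hz'mem).1
  rw [hz'1] at this
  nlinarith

end ValleyAux
namespace ValleyAux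

lemma affine_pair {A B : ℝ × ℝ} {s v1 : ℝ} (h1 : A.1 ≤ B.1) (h2 : A.2 ≤ B.2)
    (hs : A.1 + A.2 ≤ s) (hs' : s ≤ B.1 + B.2)
    (hv : v1 * ((B.1 + B.2) - (A.1 + A.2))
        = A.1 * ((B.1 + B.2) - (A.1 + A.2)) + (s - (A.1 + A.2)) * (B.1 - A.1))
    (hv0 : s = A.1 + A.2 → v1 = A.1) :
    ((v1, s - v1) : ℝ × ℝ)
      = A + ((s - (A.1 + A.2)) / ((B.1 + B.2) - (A.1 + A.2))) • (B - A) := by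
  rcases eq_or_ne (B.1 + B.2) (A.1 + A.2) with hdeg | hΔ
  · have hB1 : B.1 = A.1 := by linarith
    have hB2 : B.2 = A.2 := by linarith
    have hsA : s = A.1 + A.2 := by linarith
    have hv1 : v1 = A.1 := hv0 hsA
    have hBA : B - A = 0 := by
      apply Prod.ext <;> simp [Prod.fst_sub, Prod.snd_sub, hB1, hB2]
    rw [hBA, smul_zero, add_zero, hv1, hsA]
    apply Prod.ext <;> simp
  · have hΔ' : (B.1 + B.2) - (A.1 + A.2) ≠ 0 := sub_ne_zero.2 hΔ
    apply Prod.ext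
    · simp only [Prod.fst_add, Prod.smul_fst, smul_eq_mul, Prod.fst_sub]
      field_simp
      linarith [hv]
    · simp only [Prod.snd_add, Prod.smul_snd, smul_eq_mul, Prod.snd_sub]
      field_simp
      nlinarith [hv]

variable {x y z₀ d : ℝ × ℝ}

lemma piece_mid (hd1 : 0 < d.1) (hd2 : 0 < d.2) {xh yh : ℝ × ℝ}
    (hx1 : x.1 ≤ xh.1) (hx2 : x.2 ≤ xh.2)
    (hm1 : xh.1 ≤ yh.1) (hm2 : xh.2 ≤ yh.2)
    (hy1 : yh.1 ≤ y.1) (hy2 : yh.2 ≤ y.2)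
    (hcx : cF z₀ d (xh.1 + xh.2) = xh.1) (hcy : cF z₀ d (yh.1 + yh.2) = yh.1) :
    ∀ s ∈ Icc (xh.1 + xh.2) (yh.1 + yh.2),
      ((fF x y z₀ d s, s - fF x y z₀ d s) : ℝ × ℝ)
        = xh + ((s - (xh.1 + xh.2)) / ((yh.1 + yh.2) - (xh.1 + xh.2))) • (yh - xh) := by
  intro s hs
  obtain ⟨hsl, hsr⟩ := hs
  have hδ : (0:ℝ) < d.1 + d.2 := by linarith
  have hc1 : xh.1 ≤ cF z₀ d s := by rw [← hcx]; exact cF_mono hd1 hd2 hsl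
  have hc2 : cF z₀ d s ≤ yh.1 := by rw [← hcy]; exact cF_mono hd1 hd2 hsr
  have hlip1 : cF z₀ d s ≤ cF z₀ d (xh.1 + xh.2) + (s - (xh.1 + xh.2)) :=
    cF_lip hd1 hd2 hsl
  have hlip2 : cF z₀ d (yh.1 + yh.2) ≤ cF z₀ d s + ((yh.1 + yh.2) - s) :=
    cF_lip hd1 hd2 hsr
  rw [hcx] at hlip1
  rw [hcy] at hlip2
  -- so xh.2 ≤ s - cF s ≤ yh.2
  have hfc : fF x y z₀ d s = cF z₀ d s := by
    rw [fF]
    have hhic : cF z₀ d s ≤ hiF x y s := le_min (by linarith) (by linarith)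
    have hloc : loF x y s ≤ cF z₀ d s := max_le (by linarith) (by linarith)
    rw [min_eq_right hhic, max_eq_right hloc]
  rw [hfc]
  apply affine_pair (by linarith) (by linarith) hsl hsr
  · -- main algebraic identity
    have hv : cF z₀ d s * ((yh.1 + yh.2) - (xh.1 + xh.2))
        = cF z₀ d (xh.1 + xh.2) * ((yh.1 + yh.2) - (xh.1 + xh.2))
          + (s - (xh.1 + xh.2)) * (cF z₀ d (yh.1 + yh.2) - cF z₀ d (xh.1 + xh.2)) := by
      simp only [cF]
      field_simp
      ring
    rw [hcx, hcy] at hv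
    exact hv
  · intro hseq
    rw [hseq, hcx]

lemma piece_first (hd1 : 0 < d.1) (hd2 : 0 < d.2)
    (hxy1 : x.1 ≤ y.1) (hxy2 : x.2 ≤ y.2) {xh : ℝ × ℝ}
    (hx1 : x.1 ≤ xh.1) (hx2 : x.2 ≤ xh.2)
    (hy1 : xh.1 ≤ y.1) (hy2 : xh.2 ≤ y.2)
    (hcx : cF z₀ d (xh.1 + xh.2) = xh.1)
    (hco : xh.1 = x.1 ∨ xh.2 = x.2) :
    ∀ s ∈ Icc (x.1 + x.2) (xh.1 + xh.2),
      ((fF x y z₀ d s, s - fF x y z₀ d s) : ℝ × ℝ)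
        = x + ((s - (x.1 + x.2)) / ((xh.1 + xh.2) - (x.1 + x.2))) • (xh - x) := by
  intro s hs
  obtain ⟨hsl, hsr⟩ := hs
  have hlip : cF z₀ d (xh.1 + xh.2) ≤ cF z₀ d s + ((xh.1 + xh.2) - s) :=
    cF_lip hd1 hd2 hsr
  rw [hcx] at hlip
  have hcs : cF z₀ d s ≤ cF z₀ d (xh.1 + xh.2) := cF_mono hd1 hd2 hsr
  rw [hcx] at hcs
  rcases hco with hB | hA
  · -- vertical first piece : fF = x.1
    have hfc : fF x y z₀ d s = x.1 := by
      rw [fF]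
      have hlo : loF x y s = x.1 := max_eq_left (by linarith)
      have hmc : min (hiF x y s) (cF z₀ d s) ≤ x.1 :=
        le_trans (min_le_right _ _) (by linarith [hcs, hB])
      rw [hlo]
      exact max_eq_left hmc
    rw [hfc]
    apply affine_pair (by linarith) (by linarith) hsl hsr
    · rw [hB]; ring
    · intro _; rfl
  · -- horizontal first piece : fF = s - x.2
    have hfc : fF x y z₀ d s = s - x.2 := by
      rw [fF]
      have hhi : hiF x y s = s - x.2 := min_eq_right (by linarith)
      have hcge : s - x.2 ≤ cF z₀ d s := by linarith [hlip, hA]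
      have hmc : min (hiF x y s) (cF z₀ d s) = s - x.2 := by
        rw [hhi]; exact min_eq_left hcge
      rw [hmc]
      exact max_eq_right (max_le (by linarith) (by linarith))
    rw [hfc]
    apply affine_pair (by linarith) (by linarith) hsl hsr
    · rw [hA]; ring
    · intro hseq; linarith

lemma piece_last (hd1 : 0 < d.1) (hd2 : 0 < d.2)
    (hxy1 : x.1 ≤ y.1) (hxy2 : x.2 ≤ y.2) {yh : ℝ × ℝ}
    (hx1 : x.1 ≤ yh.1) (hx2 : x.2 ≤ yh.2)
    (hy1 : yh.1 ≤ y.1) (hy2 : yh.2 ≤ y.2)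
    (hcy : cF z₀ d (yh.1 + yh.2) = yh.1)
    (hco : yh.1 = y.1 ∨ yh.2 = y.2) :
    ∀ s ∈ Icc (yh.1 + yh.2) (y.1 + y.2),
      ((fF x y z₀ d s, s - fF x y z₀ d s) : ℝ × ℝ)
        = yh + ((s - (yh.1 + yh.2)) / ((y.1 + y.2) - (yh.1 + yh.2))) • (y - yh) := by
  intro s hs
  obtain ⟨hsl, hsr⟩ := hs
  have hlip : cF z₀ d s ≤ cF z₀ d (yh.1 + yh.2) + (s - (yh.1 + yh.2)) :=
    cF_lip hd1 hd2 hsl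
  rw [hcy] at hlip
  have hcs : cF z₀ d (yh.1 + yh.2) ≤ cF z₀ d s := cF_mono hd1 hd2 hsl
  rw [hcy] at hcs
  rcases hco with hC | hD
  · -- fF = y.1
    have hfc : fF x y z₀ d s = y.1 := by
      rw [fF]
      have hhi : hiF x y s = y.1 := min_eq_left (by linarith)
      have hmc : min (hiF x y s) (cF z₀ d s) = y.1 := by
        rw [hhi]; exact min_eq_left (by linarith [hcs, hC])
      rw [hmc]
      exact max_eq_right (max_le hxy1 (by linarith))
    rw [hfc]
    apply affine_pair (by linarith) (by linarith) hsl hsr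
    · rw [hC]; ring
    · intro hseq; linarith
  · -- fF = s - y.2
    have hfc : fF x y z₀ d s = s - y.2 := by
      rw [fF]
      have hcle : cF z₀ d s ≤ s - y.2 := by linarith [hlip, hD]
      have hmc : min (hiF x y s) (cF z₀ d s) ≤ s - y.2 :=
        le_trans (min_le_right _ _) hcle
      have hlo : loF x y s = s - y.2 := max_eq_right (by linarith)
      rw [hlo]
      exact max_eq_left hmc
    rw [hfc]
    apply affine_pair (by linarith) (by linarith) hsl hsr
    · rw [hD]; ring
    · intro hseq; linarith

end ValleyAux
namespace ValleyAux

variable {x y z₀ d : ℝ × ℝ}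

lemma euclInfDist_line (hd1 : 0 < d.1) (hd2 : 0 < d.2)
    {ℓ : Set (ℝ × ℝ)} (hℓ : ℓ = {z : ℝ × ℝ | ∃ lam : ℝ, z = z₀ + lam • d}) (z : ℝ × ℝ) :
    euclInfDist z ℓ
      = |d.2 * (z.1 - z₀.1) - d.1 * (z.2 - z₀.2)| / Real.sqrt (d.1 ^ 2 + d.2 ^ 2) := by
  have hQ : (0:ℝ) < d.1 ^ 2 + d.2 ^ 2 := by positivity
  set S := d.2 * (z.1 - z₀.1) - d.1 * (z.2 - z₀.2) with hS
  have habs : |S| / Real.sqrt (d.1 ^ 2 + d.2 ^ 2)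
      = Real.sqrt (S ^ 2 / (d.1 ^ 2 + d.2 ^ 2)) := by
    rw [Real.sqrt_div' _ hQ.le, Real.sqrt_sq_eq_abs]
  rw [euclInfDist]
  apply IsLeast.csInf_eq
  constructor
  · -- the minimizing point
    set lam₀ : ℝ := ((z.1 - z₀.1) * d.1 + (z.2 - z₀.2) * d.2) / (d.1 ^ 2 + d.2 ^ 2) with hlam₀
    refine ⟨z₀ + lam₀ • d, by rw [hℓ]; exact ⟨lam₀, rfl⟩, ?_⟩
    have e1 : (z₀ + lam₀ • d).1 = z₀.1 + lam₀ * d.1 := by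
      simp [Prod.fst_add, smul_eq_mul]
    have e2 : (z₀ + lam₀ • d).2 = z₀.2 + lam₀ * d.2 := by
      simp [Prod.snd_add, smul_eq_mul]
    simp only [e1, e2]
    have einner : (z.1 - (z₀.1 + lam₀ * d.1)) ^ 2 + (z.2 - (z₀.2 + lam₀ * d.2)) ^ 2
        = S ^ 2 / (d.1 ^ 2 + d.2 ^ 2) := by
      rw [hlam₀, hS]
      field_simp
      ring
    rw [einner, ← habs]
  · rintro v ⟨ww, hw, rfl⟩
    rw [hℓ] at hw
    obtain ⟨lam, rfl⟩ := hw
    have e1 : (z₀ + lam • d).1 = z₀.1 + lam * d.1 := by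
      simp [Prod.fst_add, smul_eq_mul]
    have e2 : (z₀ + lam • d).2 = z₀.2 + lam * d.2 := by
      simp [Prod.snd_add, smul_eq_mul]
    simp only [e1, e2]
    rw [habs]
    apply Real.sqrt_le_sqrt
    rw [div_le_iff₀ hQ, hS]
    nlinarith [sq_nonneg (d.1 * (z.1 - z₀.1 - lam * d.1) + d.2 * (z.2 - z₀.2 - lam * d.2)),
      sq_nonneg (z.1 - z₀.1 - lam * d.1), sq_nonneg (z.2 - z₀.2 - lam * d.2)]

lemma side_dichotomy (hd1 : 0 < d.1) (hd2 : 0 < d.2)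
    (hxy1 : x.1 ≤ y.1) (hxy2 : x.2 ≤ y.2)
    {ℓ : Set (ℝ × ℝ)} (hℓ : ℓ = {z : ℝ × ℝ | ∃ lam : ℝ, z = z₀ + lam • d})
    {Ξ : Set (ℝ × ℝ)} (hΞ : Ξ = Set.Icc x.1 y.1 ×ˢ Set.Icc x.2 y.2)
    (hempty : ℓ ∩ Ξ = ∅) :
    (∀ s ∈ Icc (x.1 + x.2) (y.1 + y.2), cF z₀ d s < loF x y s) ∨
    (∀ s ∈ Icc (x.1 + x.2) (y.1 + y.2), hiF x y s < cF z₀ d s) := by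
  have hnot : ∀ s ∈ Icc (x.1 + x.2) (y.1 + y.2),
      cF z₀ d s < loF x y s ∨ hiF x y s < cF z₀ d s := by
    intro s hs
    by_contra hcon
    push_neg at hcon
    obtain ⟨hlo, hhi⟩ := hcon
    have hmem : ((cF z₀ d s, s - cF z₀ d s) : ℝ × ℝ) ∈ ℓ ∩ Ξ := by
      constructor
      · rw [hℓ]; exact cF_mem_line hd1 hd2 s
      · rw [hΞ]
        have h1 := le_trans (le_max_left _ _ : x.1 ≤ loF x y s) hlo
        have h2 := le_trans hhi (min_le_left _ _ : hiF x y s ≤ y.1)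
        have h3 := le_trans hhi (min_le_right _ _ : hiF x y s ≤ s - x.2)
        have h4 := le_trans (le_max_right _ _ : s - y.2 ≤ loF x y s) hlo
        refine ⟨⟨h1, h2⟩, ⟨?_, ?_⟩⟩
        · show x.2 ≤ s - cF z₀ d s; linarith
        · show s - cF z₀ d s ≤ y.2; linarith
    rw [hempty] at hmem
    exact hmem
  by_cases hall : ∀ s ∈ Icc (x.1 + x.2) (y.1 + y.2), cF z₀ d s < loF x y s
  · exact Or.inl hall
  · push_neg at hall
    obtain ⟨sb, hsb, hsb'⟩ := hall
    have hsbhi : hiF x y sb < cF z₀ d sb := (hnot sb hsb).resolve_left (not_lt.2 hsb')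
    right
    intro s hs
    by_contra hcon
    push_neg at hcon
    -- c s ≤ hi s ; also c s < lo s ≤ hi s
    have hslo : cF z₀ d s < loF x y s := (hnot s hs).resolve_right (not_lt.2 hcon)
    have hshi : cF z₀ d s - hiF x y s ≤ 0 := by
      have := lo_le_hi hxy1 hxy2 hs
      linarith
    have hsbhi' : 0 ≤ cF z₀ d sb - hiF x y sb := by linarith
    have hcontφ : Continuous (fun t => cF z₀ d t - hiF x y t) := by
      unfold cF hiF; fun_prop
    rcases le_total s sb with hle | hle
    · obtain ⟨t, ht, ht'⟩ := intermediate_value_Icc hle hcontφ.continuousOn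
        (⟨hshi, hsbhi'⟩ : (0:ℝ) ∈ Icc (cF z₀ d s - hiF x y s) (cF z₀ d sb - hiF x y sb))
      have htIcc : t ∈ Icc (x.1 + x.2) (y.1 + y.2) :=
        Icc_subset_Icc hs.1 hsb.2 ht
      have hteq : cF z₀ d t = hiF x y t := by
        simp only [] at ht'
        linarith
      rcases hnot t htIcc with hlt | hlt
      · have := lo_le_hi hxy1 hxy2 htIcc
        linarith
      · linarith
    · obtain ⟨t, ht, ht'⟩ := intermediate_value_Icc' hle hcontφ.continuousOn
        (⟨hshi, hsbhi'⟩ : (0:ℝ) ∈ Icc (cF z₀ d s - hiF x y s) (cF z₀ d sb - hiF x y sb))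
      have htIcc : t ∈ Icc (x.1 + x.2) (y.1 + y.2) :=
        Icc_subset_Icc hsb.1 hs.2 ht
      have hteq : cF z₀ d t = hiF x y t := by
        simp only [] at ht'
        linarith
      rcases hnot t htIcc with hlt | hlt
      · have := lo_le_hi hxy1 hxy2 htIcc
        linarith
      · linarith

lemma fF_eq_lo (hside : ∀ s ∈ Icc (x.1 + x.2) (y.1 + y.2), cF z₀ d s ≤ loF x y s)
    (hxy1 : x.1 ≤ y.1) (hxy2 : x.2 ≤ y.2)
    {s : ℝ} (hs : s ∈ Icc (x.1 + x.2) (y.1 + y.2)) :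
    fF x y z₀ d s = loF x y s := by
  have hc := hside s hs
  have hlh := lo_le_hi hxy1 hxy2 hs
  rw [fF, min_eq_right (by linarith), max_eq_left hc]

lemma fF_eq_hi (hside : ∀ s ∈ Icc (x.1 + x.2) (y.1 + y.2), hiF x y s ≤ cF z₀ d s)
    (hxy1 : x.1 ≤ y.1) (hxy2 : x.2 ≤ y.2)
    {s : ℝ} (hs : s ∈ Icc (x.1 + x.2) (y.1 + y.2)) :
    fF x y z₀ d s = hiF x y s := by
  have hc := hside s hs
  have hlh := lo_le_hi hxy1 hxy2 hs
  rw [fF, min_eq_left hc, max_eq_right hlh]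

end ValleyAux
namespace ValleyAux

variable {x y z₀ d : ℝ × ℝ}

lemma S_eq (hd1 : 0 < d.1) (hd2 : 0 < d.2) (a b : ℝ) :
    d.2 * (a - z₀.1) - d.1 * (b - z₀.2)
      = (d.1 + d.2) * (a - cF z₀ d (a + b)) := by
  have hδ : d.1 + d.2 ≠ 0 := by positivity
  rw [cF]
  field_simp
  ring

lemma pieceII_lo_a (hxy1 : x.1 ≤ y.1) (hxy2 : x.2 ≤ y.2) {ξ : ℝ × ℝ}
    (hξ1 : ξ.1 = x.1) (hξ2 : ξ.2 = y.2)
    (hside : ∀ s ∈ Icc (x.1 + x.2) (y.1 + y.2), cF z₀ d s ≤ loF x y s) :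
    ∀ s ∈ Icc (x.1 + x.2) (ξ.1 + ξ.2),
      ((fF x y z₀ d s, s - fF x y z₀ d s) : ℝ × ℝ)
        = x + ((s - (x.1 + x.2)) / ((ξ.1 + ξ.2) - (x.1 + x.2))) • (ξ - x) := by
  intro s hs
  obtain ⟨hsl, hsr⟩ := hs
  rw [hξ1, hξ2] at hsr
  have hsIcc : s ∈ Icc (x.1 + x.2) (y.1 + y.2) := ⟨hsl, by linarith⟩
  have hfc : fF x y z₀ d s = x.1 := by
    rw [fF_eq_lo hside hxy1 hxy2 hsIcc, loF]
    exact max_eq_left (by linarith)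
  rw [hfc]
  apply affine_pair (by linarith) (by linarith) hsl (by rw [hξ1, hξ2]; linarith)
  · rw [hξ1]; ring
  · intro _; rfl

lemma pieceII_lo_b (hxy1 : x.1 ≤ y.1) (hxy2 : x.2 ≤ y.2) {ξ : ℝ × ℝ}
    (hξ1 : ξ.1 = x.1) (hξ2 : ξ.2 = y.2)
    (hside : ∀ s ∈ Icc (x.1 + x.2) (y.1 + y.2), cF z₀ d s ≤ loF x y s) :
    ∀ s ∈ Icc (ξ.1 + ξ.2) (y.1 + y.2),
      ((fF x y z₀ d s, s - fF x y z₀ d s) : ℝ × ℝ)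
        = ξ + ((s - (ξ.1 + ξ.2)) / ((y.1 + y.2) - (ξ.1 + ξ.2))) • (y - ξ) := by
  intro s hs
  obtain ⟨hsl, hsr⟩ := hs
  rw [hξ1, hξ2] at hsl
  have hsIcc : s ∈ Icc (x.1 + x.2) (y.1 + y.2) := ⟨by linarith, hsr⟩
  have hfc : fF x y z₀ d s = s - y.2 := by
    rw [fF_eq_lo hside hxy1 hxy2 hsIcc, loF]
    exact max_eq_right (by linarith)
  rw [hfc]
  apply affine_pair (by rw [hξ1]; linarith) (by rw [hξ2]) (by rw [hξ1, hξ2]; linarith) hsr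
  · rw [hξ1, hξ2]; ring
  · intro hseq; rw [hξ1, hξ2] at hseq; rw [hξ1]; linarith

lemma pieceII_hi_a (hxy1 : x.1 ≤ y.1) (hxy2 : x.2 ≤ y.2) {ξ : ℝ × ℝ}
    (hξ1 : ξ.1 = y.1) (hξ2 : ξ.2 = x.2)
    (hside : ∀ s ∈ Icc (x.1 + x.2) (y.1 + y.2), hiF x y s ≤ cF z₀ d s) :
    ∀ s ∈ Icc (x.1 + x.2) (ξ.1 + ξ.2),
      ((fF x y z₀ d s, s - fF x y z₀ d s) : ℝ × ℝ)
        = x + ((s - (x.1 + x.2)) / ((ξ.1 + ξ.2) - (x.1 + x.2))) • (ξ - x) := by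
  intro s hs
  obtain ⟨hsl, hsr⟩ := hs
  rw [hξ1, hξ2] at hsr
  have hsIcc : s ∈ Icc (x.1 + x.2) (y.1 + y.2) := ⟨hsl, by linarith⟩
  have hfc : fF x y z₀ d s = s - x.2 := by
    rw [fF_eq_hi hside hxy1 hxy2 hsIcc, hiF]
    exact min_eq_right (by linarith)
  rw [hfc]
  apply affine_pair (by rw [hξ1]; linarith) (by rw [hξ2]) hsl (by rw [hξ1, hξ2]; linarith)
  · rw [hξ1, hξ2]; ring
  · intro hseq; linarith

lemma pieceII_hi_b (hxy1 : x.1 ≤ y.1) (hxy2 : x.2 ≤ y.2) {ξ : ℝ × ℝ}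
    (hξ1 : ξ.1 = y.1) (hξ2 : ξ.2 = x.2)
    (hside : ∀ s ∈ Icc (x.1 + x.2) (y.1 + y.2), hiF x y s ≤ cF z₀ d s) :
    ∀ s ∈ Icc (ξ.1 + ξ.2) (y.1 + y.2),
      ((fF x y z₀ d s, s - fF x y z₀ d s) : ℝ × ℝ)
        = ξ + ((s - (ξ.1 + ξ.2)) / ((y.1 + y.2) - (ξ.1 + ξ.2))) • (y - ξ) := by
  intro s hs
  obtain ⟨hsl, hsr⟩ := hs
  rw [hξ1, hξ2] at hsl
  have hsIcc : s ∈ Icc (x.1 + x.2) (y.1 + y.2) := ⟨by linarith, hsr⟩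
  have hfc : fF x y z₀ d s = y.1 := by
    rw [fF_eq_hi hside hxy1 hxy2 hsIcc, hiF]
    exact min_eq_left (by linarith)
  rw [hfc]
  apply affine_pair (by rw [hξ1]) (by rw [hξ2]; linarith) (by rw [hξ1, hξ2]; linarith) hsr
  · rw [hξ1]; ring
  · intro _; rw [hξ1]

end ValleyAux

set_option maxHeartbeats 2000000 in
open ValleyAux in
/-- Given a valley `ℓ` of positive slope for
`h(z) = N((p + z₁·w) − (q + z₂·u))` and points `x ≤ y` with box `Ξ = [x₁,y₁] × [x₂,y₂]`:
(i) if `ℓ ∩ Ξ ≠ ∅` (witnessed by a componentwise-minimal point `x̂` and a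
componentwise-maximal point `ŷ` of `ℓ ∩ Ξ`), the `(x,y)`-path tracing the segments
`x → x̂ → ŷ → y` has cost at most that of every `(x,y)`-path;
(ii) if `ℓ ∩ Ξ = ∅`, the `(x,y)`-path tracing `x → ξ → y`, where
`ξ ∈ {(x₁,y₂), (y₁,x₂)}` is closest to `ℓ` in Euclidean distance, has cost at most
that of every `(x,y)`-path. -/
theorem valley_induced_optimal_paths
    (N : ℝ × ℝ → ℝ) (hN : IsNorm N)
    (p q w u : ℝ × ℝ) (hw : N w = 1) (hu : N u = 1)
    (h : ℝ × ℝ → ℝ)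
    (hh : ∀ z : ℝ × ℝ, h z = N ((p + z.1 • w) - (q + z.2 • u)))
    (z₀ d : ℝ × ℝ) (hd1 : 0 < d.1) (hd2 : 0 < d.2)
    (ℓ : Set (ℝ × ℝ)) (hℓ : ℓ = {z : ℝ × ℝ | ∃ lam : ℝ, z = z₀ + lam • d})
    (hvalley : ∀ z ∈ ℓ,
      AntitoneOn (fun t => h (z.1 + t, z.2 - t)) (Set.Iic 0) ∧
      MonotoneOn (fun t => h (z.1 + t, z.2 - t)) (Set.Ici 0))
    (x y : ℝ × ℝ) (hxy1 : x.1 ≤ y.1) (hxy2 : x.2 ≤ y.2)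
    (Ξ : Set (ℝ × ℝ)) (hΞ : Ξ = Set.Icc x.1 y.1 ×ˢ Set.Icc x.2 y.2) :
    -- (i)
    (∀ xh yh : ℝ × ℝ,
      xh ∈ ℓ ∩ Ξ → (∀ z ∈ ℓ ∩ Ξ, xh.1 ≤ z.1 ∧ xh.2 ≤ z.2) →
      yh ∈ ℓ ∩ Ξ → (∀ z ∈ ℓ ∩ Ξ, z.1 ≤ yh.1 ∧ z.2 ≤ yh.2) →
      ∃ f : ℝ → ℝ, IsPath x y f ∧
        ((fun s => ((f s, s - f s) : ℝ × ℝ)) '' Set.Icc (x.1 + x.2) (y.1 + y.2)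
          = segment ℝ x xh ∪ segment ℝ xh yh ∪ segment ℝ yh y) ∧
        ∀ g : ℝ → ℝ, IsPath x y g → pathCost h x y f ≤ pathCost h x y g) ∧
    -- (ii)
    (ℓ ∩ Ξ = ∅ →
      ∀ ξ : ℝ × ℝ,
        ((ξ = (x.1, y.2) ∧ euclInfDist (x.1, y.2) ℓ ≤ euclInfDist (y.1, x.2) ℓ) ∨
         (ξ = (y.1, x.2) ∧ euclInfDist (y.1, x.2) ℓ ≤ euclInfDist (x.1, y.2) ℓ)) →
        ∃ f : ℝ → ℝ, IsPath x y f ∧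
          ((fun s => ((f s, s - f s) : ℝ × ℝ)) '' Set.Icc (x.1 + x.2) (y.1 + y.2)
            = segment ℝ x ξ ∪ segment ℝ ξ y) ∧
          ∀ g : ℝ → ℝ, IsPath x y g → pathCost h x y f ≤ pathCost h x y g) := by
  have hcont : Continuous h := h_continuous hN hh
  constructor
  · -- Part (i)
    intro xh yh hxhmem hmin hyhmem hmax
    obtain ⟨hxhl, hxhX⟩ := hxhmem
    obtain ⟨hyhl, hyhX⟩ := hyhmem
    rw [hΞ] at hxhX hyhX
    obtain ⟨⟨ha1, ha2⟩, ha3, ha4⟩ := hxhX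
    obtain ⟨⟨hb1, hb2⟩, hb3, hb4⟩ := hyhX
    obtain ⟨hm1, hm2⟩ := hmin yh ⟨hyhl, by rw [hΞ]; exact ⟨⟨hb1, hb2⟩, hb3, hb4⟩⟩
    have hxhl' := hxhl
    have hyhl' := hyhl
    rw [hℓ] at hxhl' hyhl'
    obtain ⟨lamx, hlamx⟩ := hxhl'
    obtain ⟨lamy, hlamy⟩ := hyhl'
    have hcx := cF_at (z₀ := z₀) hd1 hd2 hlamx
    have hcy := cF_at (z₀ := z₀) hd1 hd2 hlamy
    have hcox := min_corner hd1 hd2 hℓ hΞ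
      ⟨hxhl, by rw [hΞ]; exact ⟨⟨ha1, ha2⟩, ha3, ha4⟩⟩ hmin
    have hcoy := max_corner hd1 hd2 hℓ hΞ
      ⟨hyhl, by rw [hΞ]; exact ⟨⟨hb1, hb2⟩, hb3, hb4⟩⟩ hmax
    refine ⟨fF x y z₀ d, isPath_fF hd1 hd2 hxy1 hxy2, ?_,
      fF_opt hd1 hd2 hxy1 hxy2 hcont hℓ hvalley⟩
    have hs01 : x.1 + x.2 ≤ xh.1 + xh.2 := by linarith
    have hs12 : xh.1 + xh.2 ≤ yh.1 + yh.2 := by linarith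
    have hs23 : yh.1 + yh.2 ≤ y.1 + y.2 := by linarith
    have hIcc : Set.Icc (x.1 + x.2) (y.1 + y.2)
        = (Set.Icc (x.1 + x.2) (xh.1 + xh.2) ∪ Set.Icc (xh.1 + xh.2) (yh.1 + yh.2))
          ∪ Set.Icc (yh.1 + yh.2) (y.1 + y.2) := by
      rw [Set.Icc_union_Icc_eq_Icc hs01 hs12,
        Set.Icc_union_Icc_eq_Icc (hs01.trans hs12) hs23]
    rw [hIcc, Set.image_union, Set.image_union,
      seg_image (by linarith) (by linarith)
        (piece_first hd1 hd2 hxy1 hxy2 ha1 ha3 ha2 ha4 hcx hcox),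
      seg_image (by linarith) (by linarith)
        (piece_mid hd1 hd2 ha1 ha3 hm1 hm2 hb2 hb4 hcx hcy),
      seg_image (by linarith) (by linarith)
        (piece_last hd1 hd2 hxy1 hxy2 hb1 hb3 hb2 hb4 hcy hcoy)]
  · -- Part (ii)
    intro hempty ξ hξcase
    have hδ : (0:ℝ) < d.1 + d.2 := by linarith
    have hQs : 0 < Real.sqrt (d.1 ^ 2 + d.2 ^ 2) := Real.sqrt_pos.2 (by positivity)
    have hD1 := euclInfDist_line (z₀ := z₀) hd1 hd2 hℓ (x.1, y.2)
    have hD2 := euclInfDist_line (z₀ := z₀) hd1 hd2 hℓ (y.1, x.2)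
    rw [show ((x.1, y.2) : ℝ × ℝ).1 = x.1 from rfl,
      show ((x.1, y.2) : ℝ × ℝ).2 = y.2 from rfl] at hD1
    rw [show ((y.1, x.2) : ℝ × ℝ).1 = y.1 from rfl,
      show ((y.1, x.2) : ℝ × ℝ).2 = x.2 from rfl] at hD2
    have hσ₁mem : x.1 + y.2 ∈ Set.Icc (x.1 + x.2) (y.1 + y.2) :=
      ⟨by linarith, by linarith⟩
    have hσ₂mem : y.1 + x.2 ∈ Set.Icc (x.1 + x.2) (y.1 + y.2) :=
      ⟨by linarith, by linarith⟩
    rcases side_dichotomy hd1 hd2 hxy1 hxy2 hℓ hΞ hempty with hside | hside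
    · -- line is above-left : optimal corner is (x.1, y.2)
      have hside' : ∀ s ∈ Set.Icc (x.1 + x.2) (y.1 + y.2), cF z₀ d s ≤ loF x y s :=
        fun s hs => (hside s hs).le
      have keylo : ∀ ζ : ℝ × ℝ, ζ.1 = x.1 → ζ.2 = y.2 →
          ∃ f : ℝ → ℝ, IsPath x y f ∧
            ((fun s => ((f s, s - f s) : ℝ × ℝ)) '' Set.Icc (x.1 + x.2) (y.1 + y.2)
              = segment ℝ x ζ ∪ segment ℝ ζ y) ∧
            ∀ g : ℝ → ℝ, IsPath x y g → pathCost h x y f ≤ pathCost h x y g := by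
        intro ζ hζ1 hζ2
        refine ⟨fF x y z₀ d, isPath_fF hd1 hd2 hxy1 hxy2, ?_,
          fF_opt hd1 hd2 hxy1 hxy2 hcont hℓ hvalley⟩
        have hsplit : Set.Icc (x.1 + x.2) (y.1 + y.2)
            = Set.Icc (x.1 + x.2) (ζ.1 + ζ.2) ∪ Set.Icc (ζ.1 + ζ.2) (y.1 + y.2) :=
          (Set.Icc_union_Icc_eq_Icc (by rw [hζ1, hζ2]; linarith)
            (by rw [hζ1, hζ2]; linarith)).symm
        rw [hsplit, Set.image_union,
          seg_image (le_of_eq hζ1.symm) (by rw [hζ2]; exact hxy2)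
            (pieceII_lo_a hxy1 hxy2 hζ1 hζ2 hside'),
          seg_image (by rw [hζ1]; exact hxy1) (le_of_eq hζ2)
            (pieceII_lo_b hxy1 hxy2 hζ1 hζ2 hside')]
      rcases hξcase with ⟨hξeq, hdist⟩ | ⟨hξeq, hdist⟩
      · exact keylo ξ (by rw [hξeq]) (by rw [hξeq])
      · -- ξ = (y.1, x.2) but the line is above-left : box must be degenerate
        have hc1 : cF z₀ d (x.1 + y.2) < loF x y (x.1 + y.2) := hside _ hσ₁mem
        have hlo1 : loF x y (x.1 + y.2) = x.1 := by rw [loF]; simp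
        have hS1pos : 0 < d.2 * (x.1 - z₀.1) - d.1 * (y.2 - z₀.2) := by
          rw [S_eq hd1 hd2 x.1 y.2]
          apply mul_pos hδ
          linarith
        have hc2 : cF z₀ d (y.1 + x.2) < loF x y (y.1 + x.2) := hside _ hσ₂mem
        have hS2pos : 0 < d.2 * (y.1 - z₀.1) - d.1 * (x.2 - z₀.2) := by
          rw [S_eq hd1 hd2 y.1 x.2]
          apply mul_pos hδ
          have := lo_le_hi hxy1 hxy2 hσ₂mem
          have h2 : hiF x y (y.1 + x.2) ≤ y.1 := min_le_left _ _
          linarith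
        rw [hD1, hD2] at hdist
        have habs := (div_le_div_iff_of_pos_right hQs).1 hdist
        rw [abs_of_pos hS1pos, abs_of_pos hS2pos] at habs
        have hrel : (d.2 * (x.1 - z₀.1) - d.1 * (y.2 - z₀.2))
            + (d.2 * (y.1 - x.1) + d.1 * (y.2 - x.2))
            = d.2 * (y.1 - z₀.1) - d.1 * (x.2 - z₀.2) := by ring
        have hy1 : y.1 = x.1 := by
          nlinarith [mul_nonneg hd2.le (sub_nonneg.2 hxy1),
            mul_nonneg hd1.le (sub_nonneg.2 hxy2)]
        have hy2 : y.2 = x.2 := by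
          nlinarith [mul_nonneg hd2.le (sub_nonneg.2 hxy1),
            mul_nonneg hd1.le (sub_nonneg.2 hxy2)]
        refine keylo ξ ?_ ?_
        · rw [hξeq]; exact hy1
        · rw [hξeq]; exact hy2.symm
    · -- line is below-right : optimal corner is (y.1, x.2)
      have keyhi : ∀ ζ : ℝ × ℝ, ζ.1 = y.1 → ζ.2 = x.2 →
          ∃ f : ℝ → ℝ, IsPath x y f ∧
            ((fun s => ((f s, s - f s) : ℝ × ℝ)) '' Set.Icc (x.1 + x.2) (y.1 + y.2)
              = segment ℝ x ζ ∪ segment ℝ ζ y) ∧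
            ∀ g : ℝ → ℝ, IsPath x y g → pathCost h x y f ≤ pathCost h x y g := by
        intro ζ hζ1 hζ2
        have hside' : ∀ s ∈ Set.Icc (x.1 + x.2) (y.1 + y.2), hiF x y s ≤ cF z₀ d s :=
          fun s hs => (hside s hs).le
        refine ⟨fF x y z₀ d, isPath_fF hd1 hd2 hxy1 hxy2, ?_,
          fF_opt hd1 hd2 hxy1 hxy2 hcont hℓ hvalley⟩
        have hsplit : Set.Icc (x.1 + x.2) (y.1 + y.2)
            = Set.Icc (x.1 + x.2) (ζ.1 + ζ.2) ∪ Set.Icc (ζ.1 + ζ.2) (y.1 + y.2) :=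
          (Set.Icc_union_Icc_eq_Icc (by rw [hζ1, hζ2]; linarith)
            (by rw [hζ1, hζ2]; linarith)).symm
        rw [hsplit, Set.image_union,
          seg_image (by rw [hζ1]; exact hxy1) (le_of_eq hζ2.symm)
            (pieceII_hi_a hxy1 hxy2 hζ1 hζ2 hside'),
          seg_image (le_of_eq hζ1) (by rw [hζ2]; exact hxy2)
            (pieceII_hi_b hxy1 hxy2 hζ1 hζ2 hside')]
      rcases hξcase with ⟨hξeq, hdist⟩ | ⟨hξeq, hdist⟩
      · -- ξ = (x.1, y.2) but the line is below-right : box must be degenerate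
        have hc2 : hiF x y (y.1 + x.2) < cF z₀ d (y.1 + x.2) := hside _ hσ₂mem
        have hhi2 : hiF x y (y.1 + x.2) = y.1 := by rw [hiF]; simp
        have hS2neg : d.2 * (y.1 - z₀.1) - d.1 * (x.2 - z₀.2) < 0 := by
          rw [S_eq hd1 hd2 y.1 x.2]
          apply mul_neg_of_pos_of_neg hδ
          linarith
        have hc1 : hiF x y (x.1 + y.2) < cF z₀ d (x.1 + y.2) := hside _ hσ₁mem
        have hS1neg : d.2 * (x.1 - z₀.1) - d.1 * (y.2 - z₀.2) < 0 := by
          rw [S_eq hd1 hd2 x.1 y.2]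
          apply mul_neg_of_pos_of_neg hδ
          have h1 : x.1 ≤ hiF x y (x.1 + y.2) := le_min hxy1 (by linarith)
          linarith
        rw [hD1, hD2] at hdist
        have habs := (div_le_div_iff_of_pos_right hQs).1 hdist
        rw [abs_of_neg hS1neg, abs_of_neg hS2neg] at habs
        have hrel : (d.2 * (x.1 - z₀.1) - d.1 * (y.2 - z₀.2))
            + (d.2 * (y.1 - x.1) + d.1 * (y.2 - x.2))
            = d.2 * (y.1 - z₀.1) - d.1 * (x.2 - z₀.2) := by ring
        have hy1 : y.1 = x.1 := by
          nlinarith [mul_nonneg hd2.le (sub_nonneg.2 hxy1),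
            mul_nonneg hd1.le (sub_nonneg.2 hxy2)]
        have hy2 : y.2 = x.2 := by
          nlinarith [mul_nonneg hd2.le (sub_nonneg.2 hxy1),
            mul_nonneg hd1.le (sub_nonneg.2 hxy2)]
        refine keyhi ξ ?_ ?_
        · rw [hξeq]; exact hy1.symm
        · rw [hξeq]; exact hy2
      · exact keyhi ξ (by rw [hξeq]) (by rw [hξeq])
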